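/- Consider an object-oriented FMDP with independent transitions whose transition kernel satisfies result symmetry and causation symmetry, and let p be any full-support joint probability mass function on (S, A, S') consistent with the transition kernel. Say that a current-step attribute O_r.U is an identified parent of a next-step attribute O_i.V' when the conditional independence O_r.U ⊥_p O_i.V' | ((S, A) \ {O_r.U}) fails. Then the identified graph is an object-oriented causal graph: (1) for any two instances O_a, O_b of a common class with field U and state field V, O_a.U is an identified parent of O_a.V' if and only if O_b.U is an identified parent of O_b.V'; and (2) whenever O_a, O_b are instances of a common class C_l with field U, O_i, O_j are instances of a common class C_k with state field V, i ≠ a, and j ≠ b, then O_a.U is an identified parent of O_i.V' if and only if O_b.U is an identified parent of O_j.V'. -/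

import Mathlib

open Finset

noncomputable section

/-- Marginal probability that a configuration agrees with `x` on the coordinates in `E`. -/
def marg {V : Type*} [Fintype V] [DecidableEq V] {val : V → Type*}
    [∀ v, Fintype (val v)] [∀ v, DecidableEq (val v)]
    (p : (∀ v, val v) → ℝ) (E : Finset V) (x : ∀ v, val v) : ℝ :=
  ∑ y : ∀ v, val v, if ∀ v ∈ E, y v = x v then p y else 0

/-- Conditional probability of the value of coordinate `v` given the values of `P`. -/
def condP {V : Type*} [Fintype V] [DecidableEq V] {val : V → Type*}
    [∀ v, Fintype (val v)] [∀ v, DecidableEq (val v)]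
    (p : (∀ v, val v) → ℝ) (v : V) (P : Finset V) (x : ∀ v, val v) : ℝ :=
  marg p (insert v P) x / marg p P x

/-- Conditional independence X ⊥ Y | Z, in cross-multiplied form. -/
def CondIndep {V : Type*} [Fintype V] [DecidableEq V] {val : V → Type*}
    [∀ v, Fintype (val v)] [∀ v, DecidableEq (val v)]
    (p : (∀ v, val v) → ℝ) (X Y Z : Finset V) : Prop :=
  ∀ x : ∀ v, val v,
    marg p (X ∪ Y ∪ Z) x * marg p Z x = marg p (X ∪ Z) x * marg p (Y ∪ Z) x

/-- Variables of an FMDP: states, actions, next states. -/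
abbrev FVar (ns na : ℕ) := Fin ns ⊕ (Fin na ⊕ Fin ns)

/-- Value types of FMDP variables. -/
def fv {ns na : ℕ} (Sv : Fin ns → Type) (Av : Fin na → Type) : FVar ns na → Type :=
  Sum.elim Sv (Sum.elim Av Sv)

instance {ns na : ℕ} (Sv : Fin ns → Type) (Av : Fin na → Type)
    [∀ i, Fintype (Sv i)] [∀ j, Fintype (Av j)] : ∀ v, Fintype (fv Sv Av v)
  | .inl i => inferInstanceAs (Fintype (Sv i))
  | .inr (.inl j) => inferInstanceAs (Fintype (Av j))
  | .inr (.inr k) => inferInstanceAs (Fintype (Sv k))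

instance {ns na : ℕ} (Sv : Fin ns → Type) (Av : Fin na → Type)
    [∀ i, DecidableEq (Sv i)] [∀ j, DecidableEq (Av j)] : ∀ v, DecidableEq (fv Sv Av v)
  | .inl i => inferInstanceAs (DecidableEq (Sv i))
  | .inr (.inl j) => inferInstanceAs (DecidableEq (Av j))
  | .inr (.inr k) => inferInstanceAs (DecidableEq (Sv k))

/-- The set of current-step coordinates. -/
def curSet (ns na : ℕ) : Finset (FVar ns na) :=
  (Finset.univ.image (Sum.inl : Fin ns → FVar ns na)) ∪
    (Finset.univ.image (fun j : Fin na => (Sum.inr (Sum.inl j) : FVar ns na)))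

/-- A joint pmf `p` on (S, A, S') is consistent with the transition kernel `T`. -/
def FConsistent {ns na : ℕ} {Sv : Fin ns → Type} {Av : Fin na → Type}
    [∀ i, Fintype (Sv i)] [∀ j, Fintype (Av j)]
    [∀ i, DecidableEq (Sv i)] [∀ j, DecidableEq (Av j)]
    (p : (∀ v, fv Sv Av v) → ℝ)
    (T : (∀ i, Sv i) → (∀ j, Av j) → (∀ k, Sv k) → ℝ) : Prop :=
  ∀ x, p x = marg p (curSet ns na) x *
    T (fun i => x (.inl i)) (fun j => x (.inr (.inl j))) (fun k => x (.inr (.inr k)))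

/-- The specification of an object-oriented FMDP: `K` classes, class `k` having `Nk k`
instances, state fields `SF k` and action fields `AF k`, with finite nonempty value types. -/
structure OOSpec where
  K : ℕ
  Nk : Fin K → ℕ
  SF : Fin K → Type
  AF : Fin K → Type
  SVal : ∀ k, SF k → Type
  AVal : ∀ k, AF k → Type
  finSF : ∀ k, Fintype (SF k)
  finAF : ∀ k, Fintype (AF k)
  deqSF : ∀ k, DecidableEq (SF k)
  deqAF : ∀ k, DecidableEq (AF k)
  finSVal : ∀ k u, Fintype (SVal k u)
  finAVal : ∀ k v, Fintype (AVal k v)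
  deqSVal : ∀ k u, DecidableEq (SVal k u)
  deqAVal : ∀ k v, DecidableEq (AVal k v)
  neSVal : ∀ k u, Nonempty (SVal k u)
  neAVal : ∀ k v, Nonempty (AVal k v)

attribute [instance] OOSpec.finSF OOSpec.finAF OOSpec.deqSF OOSpec.deqAF
  OOSpec.finSVal OOSpec.finAVal OOSpec.deqSVal OOSpec.deqAVal
  OOSpec.neSVal OOSpec.neAVal

namespace OOSpec

variable (σ : OOSpec)

/-- Objects: the `m`-th instance of class `k`. -/
abbrev ObjIdx := Σ k : Fin σ.K, Fin (σ.Nk k)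

/-- The fields of class `k`: state fields and action fields. -/
abbrev Fd (k : Fin σ.K) := σ.SF k ⊕ σ.AF k

/-- Value type of each field of class `k`. -/
def fval (k : Fin σ.K) : σ.Fd k → Type := Sum.elim (σ.SVal k) (σ.AVal k)

instance (k : Fin σ.K) : ∀ f : σ.Fd k, Fintype (σ.fval k f)
  | .inl u => inferInstanceAs (Fintype (σ.SVal k u))
  | .inr v => inferInstanceAs (Fintype (σ.AVal k v))

instance (k : Fin σ.K) : ∀ f : σ.Fd k, DecidableEq (σ.fval k f)
  | .inl u => inferInstanceAs (DecidableEq (σ.SVal k u))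
  | .inr v => inferInstanceAs (DecidableEq (σ.AVal k v))

/-- The attribute tuple of an instance of class `k`. -/
abbrev Obj (k : Fin σ.K) := ∀ f : σ.Fd k, σ.fval k f

/-- Current configurations: an attribute tuple for every object. -/
abbrev Cur := ∀ o : σ.ObjIdx, σ.Obj o.1

/-- Next-step configurations: values of all next-step state attributes. -/
abbrev Nxt := ∀ o : σ.ObjIdx, ∀ u : σ.SF o.1, σ.SVal o.1 u

theorem fst_swap (a b o : σ.ObjIdx) (h : a.1 = b.1) :
    (Equiv.swap a b o).1 = o.1 := by
  rcases eq_or_ne o a with rfl | ha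
  · rw [Equiv.swap_apply_left]; exact h.symm
  · rcases eq_or_ne o b with rfl | hb
    · rw [Equiv.swap_apply_right]; exact h
    · rw [Equiv.swap_apply_of_ne_of_ne ha hb]

/-- The involution σ_{ab} on current configurations exchanging the attribute tuples of
two instances `a` and `b` of a common class. -/
def swapCur (a b : σ.ObjIdx) (h : a.1 = b.1) (w : σ.Cur) : σ.Cur :=
  fun o => cast (congrArg σ.Obj (σ.fst_swap a b o h)) (w (Equiv.swap a b o))

/-- The conditional law, under `T`, of object `o`'s next-step state attributes at `w`. -/
def objLaw (T : σ.Cur → σ.Nxt → ℝ) (o : σ.ObjIdx) (w : σ.Cur)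
    (y : ∀ u : σ.SF o.1, σ.SVal o.1 u) : ℝ :=
  ∑ x' : σ.Nxt, if x' o = y then T w x' else 0

/-- The marginal of `T(· | w)` on the single next-step coordinate `O_o.u'`
(the coordinate kernel `T_{o,u}`). -/
def coordKer (T : σ.Cur → σ.Nxt → ℝ) (o : σ.ObjIdx) (u : σ.SF o.1) (w : σ.Cur)
    (y : σ.SVal o.1 u) : ℝ :=
  ∑ x' : σ.Nxt, if x' o u = y then T w x' else 0

/-- `T` has independent transitions: it factorizes over the next-step coordinates as the
product of its coordinate kernels. -/
def IndepTrans (T : σ.Cur → σ.Nxt → ℝ) : Prop :=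
  ∀ (w : σ.Cur) (x' : σ.Nxt),
    T w x' = ∏ ou : Σ o : σ.ObjIdx, σ.SF o.1, σ.coordKer T ou.1 ou.2 w (x' ou.1 ou.2)

/-- A function of the current configuration depends on the current-step coordinate
`O_j.f`: it takes different values at two configurations differing only in that coordinate. -/
def DependsOn {α : Type*} (κ : σ.Cur → α) (j : σ.ObjIdx) (f : σ.Fd j.1) : Prop :=
  ∃ w w' : σ.Cur,
    (∀ (o : σ.ObjIdx) (g : σ.Fd o.1),
      (⟨o, g⟩ : Σ o : σ.ObjIdx, σ.Fd o.1) ≠ ⟨j, f⟩ → w o g = w' o g) ∧ κ w ≠ κ w'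

/-- Result symmetry: instances of a common class transit by the same rule. -/
def ResultSym (T : σ.Cur → σ.Nxt → ℝ) : Prop :=
  ∀ (k : Fin σ.K) (m m' : Fin (σ.Nk k)) (w : σ.Cur) (y : ∀ u : σ.SF k, σ.SVal k u),
    σ.objLaw T ⟨k, m⟩ w y = σ.objLaw T ⟨k, m'⟩ (σ.swapCur ⟨k, m⟩ ⟨k, m'⟩ rfl w) y

/-- Causation symmetry: two other instances of a common class are interchangeable for the
transition of any object. -/
def CausSym (T : σ.Cur → σ.Nxt → ℝ) : Prop :=
  ∀ (i : σ.ObjIdx) (k : Fin σ.K) (m m' : Fin (σ.Nk k)),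
    (⟨k, m⟩ : σ.ObjIdx) ≠ i → (⟨k, m'⟩ : σ.ObjIdx) ≠ i →
    ∀ (w : σ.Cur) (y : ∀ u : σ.SF i.1, σ.SVal i.1 u),
      σ.objLaw T i w y = σ.objLaw T i (σ.swapCur ⟨k, m⟩ ⟨k, m'⟩ rfl w) y

end OOSpec

namespace OOSpec

variable (σ : OOSpec)

/-- Current-step coordinates: the attribute `O_o.f`. -/
abbrev CurV := Σ o : σ.ObjIdx, σ.Fd o.1

/-- Next-step coordinates: the attribute `O_o.u'`. -/
abbrev NxtV := Σ o : σ.ObjIdx, σ.SF o.1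

/-- All variables of the OO-FMDP. -/
abbrev Var := σ.CurV ⊕ σ.NxtV

/-- Value type of each variable. -/
def vval : σ.Var → Type
  | .inl v => σ.fval v.1.1 v.2
  | .inr v => σ.SVal v.1.1 v.2

instance : ∀ v : σ.Var, Fintype (σ.vval v)
  | .inl v => inferInstanceAs (Fintype (σ.fval v.1.1 v.2))
  | .inr v => inferInstanceAs (Fintype (σ.SVal v.1.1 v.2))

instance : ∀ v : σ.Var, DecidableEq (σ.vval v)
  | .inl v => inferInstanceAs (DecidableEq (σ.fval v.1.1 v.2))
  | .inr v => inferInstanceAs (DecidableEq (σ.SVal v.1.1 v.2))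

/-- Full configurations of all variables. -/
abbrev Cfg := ∀ v : σ.Var, σ.vval v

/-- The current configuration determined by a full configuration. -/
def curOf (d : σ.Cfg) : σ.Cur := fun o f => d (.inl ⟨o, f⟩)

/-- The next-step configuration determined by a full configuration. -/
def nxtOf (d : σ.Cfg) : σ.Nxt := fun o u => d (.inr ⟨o, u⟩)

/-- Building a full configuration from a current and a next configuration. -/
def mkCfg (w : σ.Cur) (x' : σ.Nxt) : σ.Cfg
  | .inl v => w v.1 v.2
  | .inr v => x' v.1 v.2

/-- The set of all current-step coordinates. -/
def curVars : Finset σ.Var := Finset.univ.image Sum.inl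

/-- A joint pmf on (S, A, S') is consistent with the transition kernel `T`. -/
def Consistent (p : σ.Cfg → ℝ) (T : σ.Cur → σ.Nxt → ℝ) : Prop :=
  ∀ d : σ.Cfg, p d = marg p σ.curVars d * T (σ.curOf d) (σ.nxtOf d)

end OOSpec

namespace OOFMDPAux

open OOSpec

variable {σ : OOSpec}

/-- The equivalence between full configurations and pairs (current, next). -/
def cfgEquiv (σ : OOSpec) : σ.Cfg ≃ σ.Cur × σ.Nxt where
  toFun d := (σ.curOf d, σ.nxtOf d)
  invFun wx := σ.mkCfg wx.1 wx.2
  left_inv d := by funext v; cases v <;> rfl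
  right_inv wx := rfl

lemma mem_curVars (v : σ.CurV) : (Sum.inl v : σ.Var) ∈ σ.curVars := by
  simp [OOSpec.curVars]

/-- Agreement off the coordinate `cu`. -/
def Agr (σ : OOSpec) (cu : σ.CurV) (w w' : σ.Cur) : Prop :=
  ∀ u : σ.CurV, u ≠ cu → w u.1 u.2 = w' u.1 u.2

instance (cu : σ.CurV) (w w' : σ.Cur) : Decidable (Agr σ cu w w') := by
  unfold Agr; infer_instance

lemma Agr.refl (cu : σ.CurV) (w : σ.Cur) : Agr σ cu w w := fun _ _ => rfl

lemma Agr.symm' {cu : σ.CurV} {w w' : σ.Cur} (h : Agr σ cu w w') : Agr σ cu w' w :=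
  fun u hu => (h u hu).symm

lemma Agr.trans' {cu : σ.CurV} {w w' w'' : σ.Cur} (h : Agr σ cu w w')
    (h' : Agr σ cu w' w'') : Agr σ cu w w'' :=
  fun u hu => (h u hu).trans (h' u hu)

/-- Marginal of `p` on the current variables, as a function of the current configuration. -/
def qw (σ : OOSpec) (p : σ.Cfg → ℝ) (w : σ.Cur) : ℝ := ∑ x' : σ.Nxt, p (σ.mkCfg w x')

/-- Master computation of marginals over a set of current coords and next coords. -/
lemma marg_split (p : σ.Cfg → ℝ) (C : Finset σ.CurV) (N : Finset σ.NxtV) (d : σ.Cfg) :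
    marg p (C.image Sum.inl ∪ N.image Sum.inr) d
      = ∑ w : σ.Cur, ∑ x' : σ.Nxt,
          if (∀ u ∈ C, w u.1 u.2 = σ.curOf d u.1 u.2) ∧
              (∀ v ∈ N, x' v.1 v.2 = σ.nxtOf d v.1 v.2)
          then p (σ.mkCfg w x') else 0 := by
  classical
  have h1 : marg p (C.image Sum.inl ∪ N.image Sum.inr) d
      = ∑ wx : σ.Cur × σ.Nxt,
          (if (∀ u ∈ C, wx.1 u.1 u.2 = σ.curOf d u.1 u.2) ∧
              (∀ v ∈ N, wx.2 v.1 v.2 = σ.nxtOf d v.1 v.2)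
          then p (σ.mkCfg wx.1 wx.2) else 0) := by
    unfold marg
    refine Fintype.sum_equiv (cfgEquiv σ) _ _ fun e => ?_
    have hiff : (∀ v ∈ C.image Sum.inl ∪ N.image Sum.inr, e v = d v) ↔
        ((∀ u ∈ C, σ.curOf e u.1 u.2 = σ.curOf d u.1 u.2) ∧
          (∀ v ∈ N, σ.nxtOf e v.1 v.2 = σ.nxtOf d v.1 v.2)) := by
      constructor
      · intro h
        exact ⟨fun u hu => h _ (Finset.mem_union_left _ (Finset.mem_image_of_mem _ hu)),
               fun v hv => h _ (Finset.mem_union_right _ (Finset.mem_image_of_mem _ hv))⟩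
      · rintro ⟨h1, h2⟩ v hv
        rcases Finset.mem_union.1 hv with hv | hv
        · obtain ⟨u, hu, rfl⟩ := Finset.mem_image.1 hv
          exact h1 u hu
        · obtain ⟨u, hu, rfl⟩ := Finset.mem_image.1 hv
          exact h2 u hu
    simp only [cfgEquiv, Equiv.coe_fn_mk]
    by_cases hcond : ∀ v ∈ C.image Sum.inl ∪ N.image Sum.inr, e v = d v
    · rw [if_pos hcond]
      exact (congrArg p ((cfgEquiv σ).left_inv e).symm).trans (if_pos (hiff.1 hcond)).symm
    · rw [if_neg hcond]
      exact (if_neg fun hc => hcond (hiff.2 hc)).symm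
  rw [h1, Fintype.sum_prod_type]

lemma eq_iff_forall_curv (w w₀ : σ.Cur) :
    (∀ u : σ.CurV, w u.1 u.2 = w₀ u.1 u.2) ↔ w = w₀ :=
  ⟨fun h => funext fun o => funext fun g => h ⟨o, g⟩, fun h u => by rw [h]⟩

lemma marg_cur (p : σ.Cfg → ℝ) (d : σ.Cfg) :
    marg p σ.curVars d = qw σ p (σ.curOf d) := by
  classical
  have h0 : σ.curVars = Finset.univ.image Sum.inl ∪ (∅ : Finset σ.NxtV).image Sum.inr := by
    simp [OOSpec.curVars]
  rw [h0, marg_split, Finset.sum_eq_single (σ.curOf d)]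
  · exact Finset.sum_congr rfl fun x' _ => if_pos ⟨fun u _ => rfl, by simp⟩
  · intro w _ hw
    refine Finset.sum_eq_zero fun x' _ => if_neg fun hc => ?_
    exact hw ((eq_iff_forall_curv w (σ.curOf d)).1 fun u => hc.1 u (Finset.mem_univ u))
  · intro h; exact absurd (Finset.mem_univ _) h

lemma marg_curZ (p : σ.Cfg → ℝ) (cu : σ.CurV) (d : σ.Cfg) :
    marg p (σ.curVars \ {Sum.inl cu}) d
      = ∑ w : σ.Cur, if Agr σ cu w (σ.curOf d) then qw σ p w else 0 := by
  classical
  have h0 : σ.curVars \ {Sum.inl cu}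
      = (Finset.univ \ {cu}).image Sum.inl ∪ (∅ : Finset σ.NxtV).image Sum.inr := by
    rw [Finset.image_sdiff _ _ Sum.inl_injective, Finset.image_singleton]
    simp [OOSpec.curVars]
  rw [h0, marg_split]
  refine Finset.sum_congr rfl fun w _ => ?_
  by_cases h : Agr σ cu w (σ.curOf d)
  · rw [if_pos h]
    refine Finset.sum_congr rfl fun x' _ => if_pos ?_
    refine ⟨fun u hu => h u ?_, by simp⟩
    simp only [Finset.mem_sdiff, Finset.mem_singleton] at hu
    exact hu.2
  · rw [if_neg h]
    refine Finset.sum_eq_zero fun x' _ => if_neg fun hc => ?_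
    exact h fun u hu => hc.1 u (by simp [hu])

lemma marg_insCur (p : σ.Cfg → ℝ) (nv : σ.NxtV) (d : σ.Cfg) :
    marg p (insert (Sum.inr nv) σ.curVars) d
      = ∑ x' : σ.Nxt, if x' nv.1 nv.2 = σ.nxtOf d nv.1 nv.2
          then p (σ.mkCfg (σ.curOf d) x') else 0 := by
  classical
  have h0 : insert (Sum.inr nv) σ.curVars
      = Finset.univ.image Sum.inl ∪ ({nv} : Finset σ.NxtV).image Sum.inr := by
    rw [Finset.image_singleton, Finset.union_comm, ← Finset.insert_eq]
    simp [OOSpec.curVars]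
  rw [h0, marg_split, Finset.sum_eq_single (σ.curOf d)]
  · refine Finset.sum_congr rfl fun x' _ => ?_
    refine if_congr ⟨fun h => h.2 nv (Finset.mem_singleton_self nv),
      fun h => ⟨fun u _ => rfl, fun v hv => ?_⟩⟩ rfl rfl
    rw [Finset.mem_singleton] at hv; subst hv; exact h
  · intro w _ hw
    refine Finset.sum_eq_zero fun x' _ => if_neg fun hc => ?_
    exact hw ((eq_iff_forall_curv w (σ.curOf d)).1 fun u => hc.1 u (Finset.mem_univ u))
  · intro h; exact absurd (Finset.mem_univ _) h

lemma marg_insZ (p : σ.Cfg → ℝ) (nv : σ.NxtV) (cu : σ.CurV) (d : σ.Cfg) :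
    marg p (insert (Sum.inr nv) (σ.curVars \ {Sum.inl cu})) d
      = ∑ w : σ.Cur, if Agr σ cu w (σ.curOf d)
          then (∑ x' : σ.Nxt, if x' nv.1 nv.2 = σ.nxtOf d nv.1 nv.2
            then p (σ.mkCfg w x') else 0)
          else 0 := by
  classical
  have h0 : insert (Sum.inr nv) (σ.curVars \ {Sum.inl cu})
      = (Finset.univ \ {cu}).image Sum.inl ∪ ({nv} : Finset σ.NxtV).image Sum.inr := by
    rw [Finset.image_sdiff _ _ Sum.inl_injective, Finset.image_singleton,
      Finset.image_singleton, Finset.union_comm, ← Finset.insert_eq]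
    simp [OOSpec.curVars]
  rw [h0, marg_split]
  refine Finset.sum_congr rfl fun w _ => ?_
  by_cases h : Agr σ cu w (σ.curOf d)
  · rw [if_pos h]
    refine Finset.sum_congr rfl fun x' _ => ?_
    refine if_congr ⟨fun hc => hc.2 nv (Finset.mem_singleton_self nv),
      fun hc => ⟨fun u hu => h u ?_, fun v hv => ?_⟩⟩ rfl rfl
    · simp only [Finset.mem_sdiff, Finset.mem_singleton] at hu
      exact hu.2
    · rw [Finset.mem_singleton] at hv; subst hv; exact hc
  · rw [if_neg h]
    refine Finset.sum_eq_zero fun x' _ => if_neg fun hc => ?_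
    exact h fun u hu => hc.1 u (by simp [hu])

end OOFMDPAux

namespace OOFMDPAux2

open OOSpec OOFMDPAux

variable {σ : OOSpec} {T : σ.Cur → σ.Nxt → ℝ} {p : σ.Cfg → ℝ}

lemma qw_pos (hppos : ∀ d, 0 < p d) (w : σ.Cur) : 0 < qw σ p w :=
  Finset.sum_pos (fun _ _ => hppos _) Finset.univ_nonempty

lemma p_eq (hpcons : σ.Consistent p T) (w : σ.Cur) (x' : σ.Nxt) :
    p (σ.mkCfg w x') = qw σ p w * T w x' := by
  have h := hpcons (σ.mkCfg w x')
  rwa [marg_cur] at h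

/-- `Dep T cu nv`: the coordinate kernel of `nv` depends on the current coordinate `cu`. -/
def Dep (σ : OOSpec) (T : σ.Cur → σ.Nxt → ℝ) (cu : σ.CurV) (nv : σ.NxtV) : Prop :=
  ∃ (w w' : σ.Cur) (y : σ.SVal nv.1.1 nv.2), Agr σ cu w w' ∧
    σ.coordKer T nv.1 nv.2 w y ≠ σ.coordKer T nv.1 nv.2 w' y

lemma nxt_exists (i : σ.ObjIdx) (V : σ.SF i.1) (y : σ.SVal i.1 V) :
    ∃ x' : σ.Nxt, x' i V = y := by
  classical
  obtain ⟨x0⟩ := (inferInstance : Nonempty σ.Nxt)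
  exact ⟨Function.update x0 i (Function.update (x0 i) V y), by simp⟩

lemma rr_eq (hpcons : σ.Consistent p T) (nv : σ.NxtV) (w : σ.Cur) (y : σ.SVal nv.1.1 nv.2) :
    (∑ x' : σ.Nxt, if x' nv.1 nv.2 = y then p (σ.mkCfg w x') else 0)
      = qw σ p w * σ.coordKer T nv.1 nv.2 w y := by
  unfold OOSpec.coordKer
  rw [Finset.mul_sum]
  refine Finset.sum_congr rfl fun x' _ => ?_
  by_cases h : x' nv.1 nv.2 = y
  · rw [if_pos h, if_pos h, p_eq hpcons]
  · rw [if_neg h, if_neg h, mul_zero]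

/-- The conditional independence in the theorem, rewritten via the transition kernel. -/
lemma CI_iff (hpcons : σ.Consistent p T) (hppos : ∀ d, 0 < p d)
    (cu : σ.CurV) (nv : σ.NxtV) :
    CondIndep p {Sum.inl cu} {Sum.inr nv} (σ.curVars \ {Sum.inl cu}) ↔
    ∀ (w : σ.Cur) (y : σ.SVal nv.1.1 nv.2),
      σ.coordKer T nv.1 nv.2 w y * (∑ v : σ.Cur, if Agr σ cu v w then qw σ p v else 0)
        = ∑ v : σ.Cur, if Agr σ cu v w
            then qw σ p v * σ.coordKer T nv.1 nv.2 v y else 0 := by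
  classical
  have hset2 : {(Sum.inl cu : σ.Var)} ∪ (σ.curVars \ {Sum.inl cu}) = σ.curVars :=
    Finset.union_sdiff_of_subset (Finset.singleton_subset_iff.2 (mem_curVars cu))
  have hset1 : {(Sum.inl cu : σ.Var)} ∪ {Sum.inr nv} ∪ (σ.curVars \ {Sum.inl cu})
      = insert (Sum.inr nv) σ.curVars := by
    rw [Finset.union_comm {(Sum.inl cu : σ.Var)} {Sum.inr nv}, Finset.union_assoc, hset2,
      ← Finset.insert_eq]
  have hset3 : {(Sum.inr nv : σ.Var)} ∪ (σ.curVars \ {Sum.inl cu})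
      = insert (Sum.inr nv) (σ.curVars \ {Sum.inl cu}) := (Finset.insert_eq _ _).symm
  constructor
  · intro hCI w y
    obtain ⟨x', hx'⟩ := nxt_exists nv.1 nv.2 y
    have h := hCI (σ.mkCfg w x')
    rw [hset1, hset2, hset3, marg_insCur, marg_cur, marg_curZ, marg_insZ] at h
    have hcur : σ.curOf (σ.mkCfg w x') = w := rfl
    have hnxt : σ.nxtOf (σ.mkCfg w x') nv.1 nv.2 = y := hx'
    rw [hcur, hnxt] at h
    rw [rr_eq hpcons] at h
    have h2 : (∑ v : σ.Cur, if Agr σ cu v w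
        then (∑ z : σ.Nxt, if z nv.1 nv.2 = y then p (σ.mkCfg v z) else 0) else 0)
        = ∑ v : σ.Cur, if Agr σ cu v w
            then qw σ p v * σ.coordKer T nv.1 nv.2 v y else 0 := by
      refine Finset.sum_congr rfl fun v _ => ?_
      by_cases hv : Agr σ cu v w
      · rw [if_pos hv, if_pos hv, rr_eq hpcons]
      · rw [if_neg hv, if_neg hv]
    rw [h2] at h
    have hq := (qw_pos (p := p) hppos w).ne'
    refine mul_left_cancel₀ hq ?_
    rw [← mul_assoc]
    exact h
  · intro h d
    rw [hset1, hset2, hset3, marg_insCur, marg_cur, marg_curZ, marg_insZ]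
    set w₀ := σ.curOf d
    set y₀ := σ.nxtOf d nv.1 nv.2
    rw [rr_eq hpcons]
    have h2 : (∑ v : σ.Cur, if Agr σ cu v w₀
        then (∑ z : σ.Nxt, if z nv.1 nv.2 = y₀ then p (σ.mkCfg v z) else 0) else 0)
        = ∑ v : σ.Cur, if Agr σ cu v w₀
            then qw σ p v * σ.coordKer T nv.1 nv.2 v y₀ else 0 := by
      refine Finset.sum_congr rfl fun v _ => ?_
      by_cases hv : Agr σ cu v w₀
      · rw [if_pos hv, if_pos hv, rr_eq hpcons]
      · rw [if_neg hv, if_neg hv]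
    rw [h2, ← h w₀ y₀]
    ring

lemma notCI_iff_dep (hpcons : σ.Consistent p T) (hppos : ∀ d, 0 < p d)
    (cu : σ.CurV) (nv : σ.NxtV) :
    (¬ CondIndep p {Sum.inl cu} {Sum.inr nv} (σ.curVars \ {Sum.inl cu}))
      ↔ Dep σ T cu nv := by
  classical
  rw [CI_iff hpcons hppos]
  rw [← not_iff_not, not_not]
  constructor
  · -- CI form → no dependence
    rintro h ⟨w, w', y, hag, hne⟩
    have hiff : ∀ v : σ.Cur, Agr σ cu v w ↔ Agr σ cu v w' :=
      fun v => ⟨fun hv => hv.trans' hag, fun hv => hv.trans' hag.symm'⟩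
    have hS : (∑ v : σ.Cur, if Agr σ cu v w then qw σ p v else 0)
        = ∑ v : σ.Cur, if Agr σ cu v w' then qw σ p v else 0 := by
      refine Finset.sum_congr rfl fun v _ => ?_
      by_cases hv : Agr σ cu v w
      · rw [if_pos hv, if_pos ((hiff v).1 hv)]
      · rw [if_neg hv, if_neg (fun hv' => hv ((hiff v).2 hv'))]
    have hR : (∑ v : σ.Cur, if Agr σ cu v w
        then qw σ p v * σ.coordKer T nv.1 nv.2 v y else 0)
        = ∑ v : σ.Cur, if Agr σ cu v w'
            then qw σ p v * σ.coordKer T nv.1 nv.2 v y else 0 := by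
      refine Finset.sum_congr rfl fun v _ => ?_
      by_cases hv : Agr σ cu v w
      · rw [if_pos hv, if_pos ((hiff v).1 hv)]
      · rw [if_neg hv, if_neg (fun hv' => hv ((hiff v).2 hv'))]
    have hSpos : 0 < ∑ v : σ.Cur, if Agr σ cu v w then qw σ p v else 0 := by
      refine Finset.sum_pos' (fun v _ => ?_) ⟨w, Finset.mem_univ w, ?_⟩
      · by_cases hv : Agr σ cu v w
        · rw [if_pos hv]; exact (qw_pos hppos v).le
        · rw [if_neg hv]
      · rw [if_pos (Agr.refl cu w)]; exact qw_pos hppos w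
    have h1 := h w y
    have h2 := h w' y
    rw [← hS, ← hR] at h2
    exact hne (mul_right_cancel₀ hSpos.ne' (h1.trans h2.symm))

  · -- no dependence → CI form
    intro hnd w y
    have hK : ∀ v : σ.Cur, Agr σ cu v w → σ.coordKer T nv.1 nv.2 v y
        = σ.coordKer T nv.1 nv.2 w y := by
      intro v hv
      by_contra hne
      exact hnd ⟨v, w, y, hv, hne⟩
    have h2 : (∑ v : σ.Cur, if Agr σ cu v w
        then qw σ p v * σ.coordKer T nv.1 nv.2 v y else 0)
        = ∑ v : σ.Cur, (if Agr σ cu v w then qw σ p v else 0)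
            * σ.coordKer T nv.1 nv.2 w y := by
      refine Finset.sum_congr rfl fun v _ => ?_
      by_cases hv : Agr σ cu v w
      · rw [if_pos hv, if_pos hv, hK v hv]
      · rw [if_neg hv, if_neg hv, zero_mul]
    rw [h2, ← Finset.sum_mul, mul_comm]
end OOFMDPAux2

namespace OOFMDPAux3

open OOSpec OOFMDPAux OOFMDPAux2

variable {σ : OOSpec} {T : σ.Cur → σ.Nxt → ℝ}

lemma swapCur_fst (k : Fin σ.K) (m m' : Fin (σ.Nk k)) (w : σ.Cur) :
    σ.swapCur ⟨k, m⟩ ⟨k, m'⟩ rfl w ⟨k, m⟩ = w ⟨k, m'⟩ := by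
  simp only [OOSpec.swapCur]
  rw [cast_eq_iff_heq, Equiv.swap_apply_left]

lemma swapCur_snd (k : Fin σ.K) (m m' : Fin (σ.Nk k)) (w : σ.Cur) :
    σ.swapCur ⟨k, m⟩ ⟨k, m'⟩ rfl w ⟨k, m'⟩ = w ⟨k, m⟩ := by
  simp only [OOSpec.swapCur]
  rw [cast_eq_iff_heq, Equiv.swap_apply_right]

lemma swapCur_other (k : Fin σ.K) (m m' : Fin (σ.Nk k)) (w : σ.Cur) (o : σ.ObjIdx)
    (h1 : o ≠ ⟨k, m⟩) (h2 : o ≠ ⟨k, m'⟩) :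
    σ.swapCur ⟨k, m⟩ ⟨k, m'⟩ rfl w o = w o := by
  simp only [OOSpec.swapCur]
  rw [cast_eq_iff_heq, Equiv.swap_apply_of_ne_of_ne h1 h2]

lemma swapCur_comm (k : Fin σ.K) (m m' : Fin (σ.Nk k)) (w : σ.Cur) :
    σ.swapCur ⟨k, m⟩ ⟨k, m'⟩ rfl w = σ.swapCur ⟨k, m'⟩ ⟨k, m⟩ rfl w := by
  funext o
  simp only [OOSpec.swapCur]
  apply eq_of_heq
  refine (cast_heq _ _).trans (HEq.trans ?_ (cast_heq _ _).symm)
  rw [Equiv.swap_comm]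

lemma mk_mk_eq_iff (k : Fin σ.K) (m m' : Fin (σ.Nk k)) (g g' : σ.Fd k) :
    ((⟨⟨k, m⟩, g⟩ : σ.CurV) = ⟨⟨k, m'⟩, g'⟩) ↔ m = m' ∧ g = g' := by
  constructor
  · intro h
    have h1 : (⟨k, m⟩ : σ.ObjIdx) = ⟨k, m'⟩ := congrArg Sigma.fst h
    have hm : m = m' := by simpa using h1
    subst hm
    have hg : g = g' := by simpa using h
    exact ⟨rfl, hg⟩
  · rintro ⟨rfl, rfl⟩; rfl

lemma agr_swap_other (k : Fin σ.K) (m m' : Fin (σ.Nk k)) (r : σ.ObjIdx) (U : σ.Fd r.1)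
    (h1 : r ≠ ⟨k, m⟩) (h2 : r ≠ ⟨k, m'⟩) {w w' : σ.Cur}
    (hag : Agr σ ⟨r, U⟩ w w') :
    Agr σ ⟨r, U⟩ (σ.swapCur ⟨k, m⟩ ⟨k, m'⟩ rfl w) (σ.swapCur ⟨k, m⟩ ⟨k, m'⟩ rfl w') := by
  rintro ⟨o, g⟩ hu
  by_cases hoa : o = (⟨k, m⟩ : σ.ObjIdx)
  · subst hoa
    show σ.swapCur ⟨k, m⟩ ⟨k, m'⟩ rfl w ⟨k, m⟩ g = σ.swapCur ⟨k, m⟩ ⟨k, m'⟩ rfl w' ⟨k, m⟩ g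
    rw [swapCur_fst, swapCur_fst]
    exact hag ⟨⟨k, m'⟩, g⟩ (fun he => h2 (congrArg Sigma.fst he).symm)
  · by_cases hob : o = (⟨k, m'⟩ : σ.ObjIdx)
    · subst hob
      show σ.swapCur ⟨k, m⟩ ⟨k, m'⟩ rfl w ⟨k, m'⟩ g = σ.swapCur ⟨k, m⟩ ⟨k, m'⟩ rfl w' ⟨k, m'⟩ g
      rw [swapCur_snd, swapCur_snd]
      exact hag ⟨⟨k, m⟩, g⟩ (fun he => h1 (congrArg Sigma.fst he).symm)
    · show σ.swapCur ⟨k, m⟩ ⟨k, m'⟩ rfl w o g = σ.swapCur ⟨k, m⟩ ⟨k, m'⟩ rfl w' o g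
      rw [swapCur_other k m m' w o hoa hob, swapCur_other k m m' w' o hoa hob]
      exact hag ⟨o, g⟩ hu

lemma agr_swap_left (k : Fin σ.K) (m m' : Fin (σ.Nk k)) (U : σ.Fd k) {w w' : σ.Cur}
    (hag : Agr σ ⟨⟨k, m⟩, U⟩ w w') :
    Agr σ ⟨⟨k, m'⟩, U⟩ (σ.swapCur ⟨k, m⟩ ⟨k, m'⟩ rfl w) (σ.swapCur ⟨k, m⟩ ⟨k, m'⟩ rfl w') := by
  rintro ⟨o, g⟩ hu
  by_cases hoa : o = (⟨k, m⟩ : σ.ObjIdx)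
  · subst hoa
    show σ.swapCur ⟨k, m⟩ ⟨k, m'⟩ rfl w ⟨k, m⟩ g = σ.swapCur ⟨k, m⟩ ⟨k, m'⟩ rfl w' ⟨k, m⟩ g
    rw [swapCur_fst, swapCur_fst]
    refine hag ⟨⟨k, m'⟩, g⟩ (fun he => hu ?_)
    obtain ⟨hm, hg⟩ := (mk_mk_eq_iff k m' m g U).1 he
    subst hm
    rw [hg]
  · by_cases hob : o = (⟨k, m'⟩ : σ.ObjIdx)
    · subst hob
      show σ.swapCur ⟨k, m⟩ ⟨k, m'⟩ rfl w ⟨k, m'⟩ g = σ.swapCur ⟨k, m⟩ ⟨k, m'⟩ rfl w' ⟨k, m'⟩ g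
      rw [swapCur_snd, swapCur_snd]
      refine hag ⟨⟨k, m⟩, g⟩ (fun he => hu ?_)
      obtain ⟨hm, hg⟩ := (mk_mk_eq_iff k m m g U).1 he
      rw [hg]
    · show σ.swapCur ⟨k, m⟩ ⟨k, m'⟩ rfl w o g = σ.swapCur ⟨k, m⟩ ⟨k, m'⟩ rfl w' o g
      rw [swapCur_other k m m' w o hoa hob, swapCur_other k m m' w' o hoa hob]
      exact hag ⟨o, g⟩ (fun he => hoa (congrArg Sigma.fst he))

lemma agr_swap_right (k : Fin σ.K) (m m' : Fin (σ.Nk k)) (U : σ.Fd k) {w w' : σ.Cur}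
    (hag : Agr σ ⟨⟨k, m'⟩, U⟩ w w') :
    Agr σ ⟨⟨k, m⟩, U⟩ (σ.swapCur ⟨k, m⟩ ⟨k, m'⟩ rfl w) (σ.swapCur ⟨k, m⟩ ⟨k, m'⟩ rfl w') := by
  rw [swapCur_comm k m m' w, swapCur_comm k m m' w']
  exact agr_swap_left k m' m U hag

lemma coordKer_objLaw (T : σ.Cur → σ.Nxt → ℝ) (o : σ.ObjIdx) (u : σ.SF o.1)
    (w : σ.Cur) (y : σ.SVal o.1 u) :
    σ.coordKer T o u w y
      = ∑ ys : (∀ v : σ.SF o.1, σ.SVal o.1 v),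
          if ys u = y then σ.objLaw T o w ys else 0 := by
  classical
  unfold OOSpec.coordKer OOSpec.objLaw
  refine Eq.symm ?_
  have hpush : ∀ ys : (∀ v : σ.SF o.1, σ.SVal o.1 v),
      (if ys u = y then (∑ x' : σ.Nxt, if x' o = ys then T w x' else 0) else 0)
      = ∑ x' : σ.Nxt, if ys u = y then (if x' o = ys then T w x' else 0) else 0 := by
    intro ys
    split_ifs with h
    · rfl
    · exact Finset.sum_const_zero.symm
  rw [Finset.sum_congr rfl fun ys _ => hpush ys, Finset.sum_comm]
  refine Finset.sum_congr rfl fun x' _ => ?_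
  rw [Finset.sum_eq_single (x' o)]
  · by_cases h : x' o u = y
    · rw [if_pos h, if_pos h, if_pos rfl]
    · rw [if_neg h, if_neg h]
  · intro ys _ hys
    by_cases h : ys u = y
    · rw [if_pos h, if_neg (fun he => hys he.symm)]
    · rw [if_neg h]
  · intro h; exact absurd (Finset.mem_univ _) h

lemma coordKer_res (hres : σ.ResultSym T) (k : Fin σ.K) (m m' : Fin (σ.Nk k))
    (V : σ.SF k) (w : σ.Cur) (y : σ.SVal k V) :
    σ.coordKer T ⟨k, m⟩ V w y
      = σ.coordKer T ⟨k, m'⟩ V (σ.swapCur ⟨k, m⟩ ⟨k, m'⟩ rfl w) y := by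
  rw [coordKer_objLaw, coordKer_objLaw]
  exact Finset.sum_congr rfl fun ys _ => by rw [hres k m m' w ys]

lemma coordKer_caus (hcaus : σ.CausSym T) (i : σ.ObjIdx) (V : σ.SF i.1)
    (k : Fin σ.K) (m m' : Fin (σ.Nk k))
    (h1 : (⟨k, m⟩ : σ.ObjIdx) ≠ i) (h2 : (⟨k, m'⟩ : σ.ObjIdx) ≠ i)
    (w : σ.Cur) (y : σ.SVal i.1 V) :
    σ.coordKer T i V w y
      = σ.coordKer T i V (σ.swapCur ⟨k, m⟩ ⟨k, m'⟩ rfl w) y := by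
  rw [coordKer_objLaw, coordKer_objLaw]
  exact Finset.sum_congr rfl fun ys _ => by rw [hcaus i k m m' h1 h2 w ys]

lemma dep_res_self (hres : σ.ResultSym T) (k : Fin σ.K) (m m' : Fin (σ.Nk k))
    (U : σ.Fd k) (V : σ.SF k) :
    Dep σ T ⟨⟨k, m⟩, U⟩ ⟨⟨k, m⟩, V⟩ → Dep σ T ⟨⟨k, m'⟩, U⟩ ⟨⟨k, m'⟩, V⟩ := by
  rintro ⟨w, w', y, hag, hne⟩
  refine ⟨σ.swapCur ⟨k, m⟩ ⟨k, m'⟩ rfl w, σ.swapCur ⟨k, m⟩ ⟨k, m'⟩ rfl w', y,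
    agr_swap_left k m m' U hag, ?_⟩
  rw [← coordKer_res hres k m m' V w y, ← coordKer_res hres k m m' V w' y]
  exact hne

lemma dep_caus (hcaus : σ.CausSym T) (i : σ.ObjIdx) (V : σ.SF i.1)
    (k : Fin σ.K) (m m' : Fin (σ.Nk k))
    (h1 : (⟨k, m⟩ : σ.ObjIdx) ≠ i) (h2 : (⟨k, m'⟩ : σ.ObjIdx) ≠ i) (U : σ.Fd k) :
    Dep σ T ⟨⟨k, m⟩, U⟩ ⟨i, V⟩ → Dep σ T ⟨⟨k, m'⟩, U⟩ ⟨i, V⟩ := by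
  rintro ⟨w, w', y, hag, hne⟩
  refine ⟨σ.swapCur ⟨k, m⟩ ⟨k, m'⟩ rfl w, σ.swapCur ⟨k, m⟩ ⟨k, m'⟩ rfl w', y,
    agr_swap_left k m m' U hag, ?_⟩
  rw [← coordKer_caus hcaus i V k m m' h1 h2 w y,
    ← coordKer_caus hcaus i V k m m' h1 h2 w' y]
  exact hne

lemma dep_res_other (hres : σ.ResultSym T) (k : Fin σ.K) (m m' : Fin (σ.Nk k))
    (V : σ.SF k) (r : σ.ObjIdx) (U : σ.Fd r.1)
    (h1 : r ≠ ⟨k, m⟩) (h2 : r ≠ ⟨k, m'⟩) :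
    Dep σ T ⟨r, U⟩ ⟨⟨k, m⟩, V⟩ → Dep σ T ⟨r, U⟩ ⟨⟨k, m'⟩, V⟩ := by
  rintro ⟨w, w', y, hag, hne⟩
  refine ⟨σ.swapCur ⟨k, m⟩ ⟨k, m'⟩ rfl w, σ.swapCur ⟨k, m⟩ ⟨k, m'⟩ rfl w', y,
    agr_swap_other k m m' r U h1 h2 hag, ?_⟩
  rw [← coordKer_res hres k m m' V w y, ← coordKer_res hres k m m' V w' y]
  exact hne

lemma dep_res_cross (hres : σ.ResultSym T) (k : Fin σ.K) (m m' : Fin (σ.Nk k))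
    (U : σ.Fd k) (V : σ.SF k) :
    Dep σ T ⟨⟨k, m'⟩, U⟩ ⟨⟨k, m⟩, V⟩ → Dep σ T ⟨⟨k, m⟩, U⟩ ⟨⟨k, m'⟩, V⟩ := by
  rintro ⟨w, w', y, hag, hne⟩
  refine ⟨σ.swapCur ⟨k, m⟩ ⟨k, m'⟩ rfl w, σ.swapCur ⟨k, m⟩ ⟨k, m'⟩ rfl w', y,
    agr_swap_right k m m' U hag, ?_⟩
  rw [← coordKer_res hres k m m' V w y, ← coordKer_res hres k m m' V w' y]
  exact hne

end OOFMDPAux3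

namespace OOFMDPAux3

open OOSpec OOFMDPAux OOFMDPAux2

variable {σ : OOSpec} {T : σ.Cur → σ.Nxt → ℝ}

lemma dep_glob (hres : σ.ResultSym T) (hcaus : σ.CausSym T)
    (l : Fin σ.K) (a b : Fin (σ.Nk l)) (U : σ.Fd l)
    (k : Fin σ.K) (mi mj : Fin (σ.Nk k)) (V : σ.SF k)
    (hia : (⟨k, mi⟩ : σ.ObjIdx) ≠ ⟨l, a⟩) (hjb : (⟨k, mj⟩ : σ.ObjIdx) ≠ ⟨l, b⟩) :
    Dep σ T ⟨⟨l, a⟩, U⟩ ⟨⟨k, mi⟩, V⟩ → Dep σ T ⟨⟨l, b⟩, U⟩ ⟨⟨k, mj⟩, V⟩ := by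
  intro h
  by_cases hib : (⟨k, mi⟩ : σ.ObjIdx) = ⟨l, b⟩
  · obtain rfl : k = l := congrArg Sigma.fst hib
    obtain rfl : mi = b := by simpa using hib
    have h1 : Dep σ T ⟨⟨k, mi⟩, U⟩ ⟨⟨k, a⟩, V⟩ := dep_res_cross hres k mi a U V h
    exact dep_res_other hres k a mj V ⟨k, mi⟩ U hia (Ne.symm hjb) h1
  · have h1 : Dep σ T ⟨⟨l, b⟩, U⟩ ⟨⟨k, mi⟩, V⟩ :=
      dep_caus hcaus ⟨k, mi⟩ V l a b (Ne.symm hia) (Ne.symm hib) U h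
    exact dep_res_other hres k mi mj V ⟨l, b⟩ U (Ne.symm hib) (Ne.symm hjb) h1

end OOFMDPAux3


open OOSpec in
/-- In an OO-FMDP with independent transitions, result symmetry and
causation symmetry, the graph identified by failures of the conditional independences
O_r.U ⊥_p O_i.V' | ((S,A) \ {O_r.U}) (for any full-support consistent pmf `p`) is an
object-oriented causal graph: identified parenthood is shared at class level, both for
local edges and for global edges. -/
theorem oo_fmdp_identified_graph_is_object_oriented
    (σ : OOSpec) (T : σ.Cur → σ.Nxt → ℝ)
    (hT0 : ∀ w x', 0 ≤ T w x') (hT1 : ∀ w, ∑ x', T w x' = 1)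
    (hind : σ.IndepTrans T) (hres : σ.ResultSym T) (hcaus : σ.CausSym T)
    (p : σ.Cfg → ℝ)
    (hppos : ∀ d, 0 < p d) (hpsum : ∑ d, p d = 1) (hpcons : σ.Consistent p T) :
    -- (1) local edges are shared within a class
    (∀ (k : Fin σ.K) (m m' : Fin (σ.Nk k)) (U : σ.Fd k) (V : σ.SF k),
      (¬ CondIndep p {Sum.inl ⟨⟨k, m⟩, U⟩} {Sum.inr ⟨⟨k, m⟩, V⟩}
          (σ.curVars \ {Sum.inl ⟨⟨k, m⟩, U⟩})) ↔
      (¬ CondIndep p {Sum.inl ⟨⟨k, m'⟩, U⟩} {Sum.inr ⟨⟨k, m'⟩, V⟩}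
          (σ.curVars \ {Sum.inl ⟨⟨k, m'⟩, U⟩}))) ∧
    -- (2) global edges are shared between pairs of classes
    (∀ (l : Fin σ.K) (a b : Fin (σ.Nk l)) (U : σ.Fd l)
       (k : Fin σ.K) (mi mj : Fin (σ.Nk k)) (V : σ.SF k),
      (⟨k, mi⟩ : σ.ObjIdx) ≠ ⟨l, a⟩ → (⟨k, mj⟩ : σ.ObjIdx) ≠ ⟨l, b⟩ →
      ((¬ CondIndep p {Sum.inl ⟨⟨l, a⟩, U⟩} {Sum.inr ⟨⟨k, mi⟩, V⟩}
          (σ.curVars \ {Sum.inl ⟨⟨l, a⟩, U⟩})) ↔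
       (¬ CondIndep p {Sum.inl ⟨⟨l, b⟩, U⟩} {Sum.inr ⟨⟨k, mj⟩, V⟩}
          (σ.curVars \ {Sum.inl ⟨⟨l, b⟩, U⟩})))) := by
    classical
  constructor
  · intro k m m' U V
    rw [OOFMDPAux2.notCI_iff_dep hpcons hppos ⟨⟨k, m⟩, U⟩ ⟨⟨k, m⟩, V⟩,
      OOFMDPAux2.notCI_iff_dep hpcons hppos ⟨⟨k, m'⟩, U⟩ ⟨⟨k, m'⟩, V⟩]
    exact ⟨OOFMDPAux3.dep_res_self hres k m m' U V,
      OOFMDPAux3.dep_res_self hres k m' m U V⟩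
  · intro l a b U k mi mj V hia hjb
    rw [OOFMDPAux2.notCI_iff_dep hpcons hppos ⟨⟨l, a⟩, U⟩ ⟨⟨k, mi⟩, V⟩,
      OOFMDPAux2.notCI_iff_dep hpcons hppos ⟨⟨l, b⟩, U⟩ ⟨⟨k, mj⟩, V⟩]
    exact ⟨OOFMDPAux3.dep_glob hres hcaus l a b U k mi mj V hia hjb,
      OOFMDPAux3.dep_glob hres hcaus l b a U k mj mi V hjb hia⟩
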